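/- Let a, b, z ∈ ℂ with |z| < 1 and b not a nonpositive integer. Then F(a,b,b;z) = (1 − z)^{−a}, i.e. ∑_{n=0}^∞ (a)_n (b)_n / ((b)_n · n!) · z^n = (1 − z)^{−a}, where (1−z)^{−a} denotes the principal complex power exp(−a · Log(1−z)). -/

import Mathlib

open scoped Nat

/-- The `n`-th term of the Gaussian hypergeometric series
`F(a,b,c;z) = ∑ (a)_n (b)_n / ((c)_n · n!) · z^n`. -/
noncomputable def hypTerm (a b c z : ℂ) (n : ℕ) : ℂ :=
  (ascPochhammer ℂ n).eval a * (ascPochhammer ℂ n).eval b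
    / ((ascPochhammer ℂ n).eval c * (n ! : ℂ)) * z ^ n

open Filter Metric Topology Finset in
/-- The binomial series: `∑ (a)_n / n! z^n = (1-z)^(-a)` for `|z| < 1`. -/
theorem binom_hasSum_aux (a z : ℂ) (hz : ‖z‖ < 1) :
    HasSum (fun n : ℕ => (ascPochhammer ℂ n).eval a / (n ! : ℂ) * z ^ n)
      ((1 - z) ^ (-a)) := by
  set c : ℕ → ℂ := fun n => (ascPochhammer ℂ n).eval a / (n ! : ℂ) with hc
  have key : ∀ n : ℕ, ((n : ℂ) + 1) * c (n + 1) = (a + n) * c n := by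
    intro n
    have hfac : ((n ! : ℂ)) ≠ 0 := Nat.cast_ne_zero.mpr n.factorial_ne_zero
    have hn1 : ((n : ℂ) + 1) ≠ 0 := by
      exact_mod_cast Nat.cast_add_one_ne_zero (R := ℂ) n
    simp only [hc, ascPochhammer_succ_eval, Nat.factorial_succ, Nat.cast_mul,
      Nat.cast_add, Nat.cast_one]
    field_simp
  -- Summability of the derivative-type majorant series
  have usum : ∀ r : ℝ, 0 ≤ r → r < 1 →
      Summable (fun n : ℕ => ‖c n‖ * n * r ^ (n - 1)) := by
    intro r hr0 hr1
    set l : ℝ := (1 + r) / 2 with hl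
    have hrl : r < l := by rw [hl]; linarith
    have hl1 : l < 1 := by rw [hl]; linarith
    apply summable_of_ratio_norm_eventually_le hl1
    filter_upwards [eventually_ge_atTop 1,
      eventually_ge_atTop ⌈‖a‖ * r / (l - r)⌉₊] with n hn1 hn2
    have hnar : ‖a‖ * r ≤ n * (l - r) := by
      have h1 : (‖a‖ * r / (l - r) : ℝ) ≤ n :=
        (Nat.le_ceil _).trans (Nat.cast_le.2 hn2)
      rw [div_le_iff₀ (by linarith)] at h1
      linarith
    have hcn1 : ‖c (n + 1)‖ * ((n : ℝ) + 1) = ‖a + n‖ * ‖c n‖ := by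
      have := congrArg norm (key n)
      rw [norm_mul, norm_mul] at this
      have hnn : ‖((n : ℂ) + 1)‖ = (n : ℝ) + 1 := by
        rw [show ((n : ℂ) + 1) = ((n + 1 : ℕ) : ℂ) by push_cast; ring,
          Complex.norm_natCast]
        push_cast; ring
      rw [hnn] at this
      linarith [this]
    have hpow : r ^ (n + 1 - 1) = r * r ^ (n - 1) := by
      obtain ⟨m, rfl⟩ := Nat.exists_eq_add_of_le hn1
      rw [Nat.add_sub_cancel_left]
      rw [show 1 + m + 1 - 1 = m + 1 by omega, pow_succ]
      ring
    have hnorm1 : ‖‖c (n + 1)‖ * ↑(n + 1) * r ^ (n + 1 - 1)‖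
        = ‖c (n + 1)‖ * ((n : ℝ) + 1) * r ^ (n + 1 - 1) := by
      rw [Real.norm_of_nonneg (by positivity)]; push_cast; ring
    have hnorm2 : ‖‖c n‖ * (n : ℝ) * r ^ (n - 1)‖
        = ‖c n‖ * (n : ℝ) * r ^ (n - 1) := by
      rw [Real.norm_of_nonneg (by positivity)]
    rw [hnorm1, hnorm2, hcn1, hpow]
    have han : ‖a + (n : ℂ)‖ ≤ ‖a‖ + n := by
      calc ‖a + (n : ℂ)‖ ≤ ‖a‖ + ‖((n : ℕ) : ℂ)‖ := norm_add_le _ _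
        _ = ‖a‖ + n := by rw [Complex.norm_natCast]
    have hnl : (‖a‖ + n) * r ≤ n * l := by nlinarith
    calc ‖a + (n : ℂ)‖ * ‖c n‖ * (r * r ^ (n - 1))
        = (‖a + (n : ℂ)‖ * r) * (‖c n‖ * r ^ (n - 1)) := by ring
      _ ≤ ((‖a‖ + n) * r) * (‖c n‖ * r ^ (n - 1)) := by
          apply mul_le_mul_of_nonneg_right _ (by positivity)
          exact mul_le_mul_of_nonneg_right han hr0
      _ ≤ ((n : ℝ) * l) * (‖c n‖ * r ^ (n - 1)) := by
          apply mul_le_mul_of_nonneg_right hnl (by positivity)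
      _ = l * (‖c n‖ * (n : ℝ) * r ^ (n - 1)) := by ring
  -- the radius we work at
  set R : ℝ := (‖z‖ + 1) / 2 with hR
  have hzn : ‖z‖ = ‖z‖ := rfl
  have hR0 : 0 < R := by rw [hR]; positivity
  have hzR : ‖z‖ < R := by rw [hzn, hR]; linarith
  have hR1 : R < 1 := by rw [hR]; linarith
  have huR := usum R hR0.le hR1
  -- the sum function and its derivative
  set f : ℂ → ℂ := fun w => ∑' n, c n * w ^ n with hf
  set f' : ℂ → ℂ := fun w => ∑' n : ℕ, c n * ((n : ℂ) * w ^ (n - 1)) with hf'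
  -- summability of the series and derivative series at each point of the ball
  have hSd : ∀ w : ℂ, ‖w‖ ≤ R → Summable (fun n : ℕ => c n * ((n : ℂ) * w ^ (n - 1))) := by
    intro w hw
    apply Summable.of_norm_bounded huR
    intro n
    rw [norm_mul, norm_mul, Complex.norm_natCast, norm_pow]
    calc ‖c n‖ * ((n : ℝ) * ‖w‖ ^ (n - 1)) ≤ ‖c n‖ * ((n : ℝ) * R ^ (n - 1)) := by
          apply mul_le_mul_of_nonneg_left _ (norm_nonneg _)
          exact mul_le_mul_of_nonneg_left (pow_le_pow_left₀ (norm_nonneg w) hw _)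
            (Nat.cast_nonneg n)
      _ = ‖c n‖ * n * R ^ (n - 1) := by ring
  have hSg : ∀ w : ℂ, ‖w‖ ≤ R → Summable (fun n : ℕ => c n * w ^ n) := by
    intro w hw
    apply Summable.of_norm_bounded_eventually_nat huR
    filter_upwards [eventually_ge_atTop 1] with n hn1
    rw [norm_mul, norm_pow]
    obtain ⟨m, rfl⟩ := Nat.exists_eq_add_of_le hn1
    have h1 : ‖w‖ ^ (1 + m) ≤ R ^ (1 + m) := pow_le_pow_left₀ (norm_nonneg w) hw _
    have h2 : R ^ (1 + m) ≤ (1 + m : ℝ) * R ^ (1 + m - 1) := by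
      rw [Nat.add_sub_cancel_left, show (1 : ℕ) + m = m + 1 from by ring, pow_succ]
      calc R ^ m * R ≤ R ^ m * 1 := by
            apply mul_le_mul_of_nonneg_left hR1.le (by positivity)
        _ = R ^ m := by ring
        _ ≤ (1 + m : ℝ) * R ^ m := by nlinarith [pow_nonneg hR0.le m]
    calc ‖c (1 + m)‖ * ‖w‖ ^ (1 + m) ≤ ‖c (1 + m)‖ * ((1 + m : ℝ) * R ^ (1 + m - 1)) := by
          apply mul_le_mul_of_nonneg_left (h1.trans h2) (norm_nonneg _)
      _ = ‖c (1 + m)‖ * (↑(1 + m) : ℝ) * R ^ (1 + m - 1) := by push_cast; ring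
  -- term-by-term differentiation
  have hderiv : ∀ w ∈ ball (0 : ℂ) R, HasDerivAt f (f' w) w := by
    intro w hw
    apply hasDerivAt_tsum_of_isPreconnected huR isOpen_ball
      (convex_ball (0 : ℂ) R).isPreconnected
      (g := fun n y => c n * y ^ n) (g' := fun n y => c n * ((n : ℂ) * y ^ (n - 1)))
      (y₀ := 0)
    · intro n y _
      exact (hasDerivAt_pow n y).const_mul (c n)
    · intro n y hy
      have hyR : ‖y‖ ≤ R := (mem_ball_zero_iff.mp hy).le
      rw [norm_mul, norm_mul, Complex.norm_natCast, norm_pow]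
      calc ‖c n‖ * ((n : ℝ) * ‖y‖ ^ (n - 1)) ≤ ‖c n‖ * ((n : ℝ) * R ^ (n - 1)) := by
            apply mul_le_mul_of_nonneg_left _ (norm_nonneg _)
            exact mul_le_mul_of_nonneg_left (pow_le_pow_left₀ (norm_nonneg y) hyR _)
              (Nat.cast_nonneg n)
        _ = ‖c n‖ * n * R ^ (n - 1) := by ring
    · exact mem_ball_self hR0
    · exact hSg 0 (by simpa using hR0.le)
    · exact hw
  -- the ODE `(1 - w) f'(w) = a f(w)` on the ball
  have hODE : ∀ w ∈ ball (0 : ℂ) R, f' w - f' w * w = a * f w := by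
    intro w hw
    have hwR : ‖w‖ ≤ R := (mem_ball_zero_iff.mp hw).le
    have Sg : HasSum (fun n : ℕ => c n * w ^ n) (f w) := (hSg w hwR).hasSum
    have Sd : HasSum (fun n : ℕ => c n * ((n : ℂ) * w ^ (n - 1))) (f' w) :=
      (hSd w hwR).hasSum
    have E1 : HasSum (fun n : ℕ => (a + n) * c n * w ^ n) (f' w) := by
      have h0 : (∑ i ∈ range 1, c i * ((i : ℂ) * w ^ (i - 1))) = 0 := by simp
      have := (hasSum_nat_add_iff' (f := fun n : ℕ => c n * ((n : ℂ) * w ^ (n - 1))) 1).mpr Sd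
      rw [h0, sub_zero] at this
      refine this.congr_fun fun n => ?_
      have : c (n + 1) * (((n : ℂ) + 1) * w ^ (n + 1 - 1)) = (a + n) * c n * w ^ n := by
        rw [show n + 1 - 1 = n from rfl, show c (n + 1) * (((n : ℂ) + 1) * w ^ n)
          = (((n : ℂ) + 1) * c (n + 1)) * w ^ n by ring, key n]
      rw [← this]
      push_cast
      ring_nf
    have E2 : HasSum (fun n : ℕ => (n : ℂ) * c n * w ^ n) (f' w * w) := by
      have H := E1.mul_right w
      have H' : HasSum (fun n : ℕ => (((n + 1 : ℕ)) : ℂ) * c (n + 1) * w ^ (n + 1))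
          (f' w * w - ∑ i ∈ range 1, (i : ℂ) * c i * w ^ i) := by
        rw [show (∑ i ∈ range 1, (i : ℂ) * c i * w ^ i) = 0 by simp, sub_zero]
        refine H.congr_fun fun n => ?_
        push_cast
        linear_combination w ^ (n + 1) * key n
      exact (hasSum_nat_add_iff' 1).mp H'
    have E3 := E1.sub E2
    have E4 : HasSum (fun n : ℕ => a * (c n * w ^ n)) (a * f w) := Sg.mul_left a
    have E3' : HasSum (fun n : ℕ => a * (c n * w ^ n)) (f' w - f' w * w) := by
      refine E3.congr_fun fun n => ?_
      ring
    exact E3'.unique E4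
  -- the function `F w = f w * (1 - w) ^ a` has zero derivative on the ball
  set F : ℂ → ℂ := fun w => f w * (1 - w) ^ a with hF
  have hmain : ∀ w ∈ ball (0 : ℂ) R, HasDerivAt F 0 w := by
    intro w hw
    have hwR : ‖w‖ < R := mem_ball_zero_iff.mp hw
    have hre : 0 < (1 - w).re := by
      have : w.re ≤ ‖w‖ := Complex.re_le_norm w
      simp only [Complex.sub_re, Complex.one_re]
      linarith
    have h1w : (1 : ℂ) - w ≠ 0 := by
      intro h
      rw [h] at hre
      simp at hre
    have hcp : HasDerivAt (fun x : ℂ => (1 - x) ^ a) (a * (1 - w) ^ (a - 1) * (-1)) w := by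
      have hbase : HasDerivAt (fun x : ℂ => 1 - x) (-1) w := by
        simpa using (hasDerivAt_id w).const_sub 1
      exact hbase.cpow_const (Or.inl hre)
    have hprod := (hderiv w hw).mul hcp
    have hsplit : (1 - w) ^ a = (1 - w) * (1 - w) ^ (a - 1) := by
      rw [show a = 1 + (a - 1) by ring, Complex.cpow_add _ _ h1w, Complex.cpow_one]
      ring_nf
    have hval : f' w * (1 - w) ^ a + f w * (a * (1 - w) ^ (a - 1) * (-1)) = 0 := by
      rw [hsplit]
      linear_combination (1 - w) ^ (a - 1) * hODE w hw
    rw [hval] at hprod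
    exact hprod
  -- F is constant on the ball
  have hz_mem : z ∈ ball (0 : ℂ) R := mem_ball_zero_iff.mpr hzR
  have h0_mem : (0 : ℂ) ∈ ball (0 : ℂ) R := mem_ball_self hR0
  have hconst : F z = F 0 := by
    apply (convex_ball (0 : ℂ) R).is_const_of_fderivWithin_eq_zero
      (𝕜 := ℂ) (f := F)
    · intro x hx
      exact (hmain x hx).differentiableAt.differentiableWithinAt
    · intro x hx
      rw [fderivWithin_of_isOpen isOpen_ball hx, (hmain x hx).hasFDerivAt.fderiv]
      ext y
      simp
    · exact hz_mem
    · exact h0_mem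
  have hF0 : F 0 = 1 := by
    have hf0 : f 0 = 1 := by
      rw [hf]
      simp only
      rw [tsum_eq_single 0 (fun n hn => by simp [zero_pow hn])]
      simp [hc, ascPochhammer_zero]
    rw [hF]
    simp only
    rw [hf0, sub_zero, Complex.one_cpow, mul_one]
  have hfz : f z * (1 - z) ^ a = 1 := by
    have h := hconst.trans hF0
    simpa [hF] using h
  have hfz' : f z = (1 - z) ^ (-a) := by
    rw [Complex.cpow_neg]
    rw [mul_comm] at hfz
    exact eq_inv_of_mul_eq_one_right hfz
  have := (hSg z hzR.le).hasSum
  rw [show (∑' n : ℕ, c n * z ^ n) = f z from rfl, hfz'] at this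
  exact this

/-- `F(a,b,b;z) = (1 − z)^{−a}` for `|z| < 1` and `b` not a nonpositive integer,
with the principal complex power. -/
theorem hypergeometric_self_eq_one_sub_cpow (a b z : ℂ) (hz : ‖z‖ < 1)
    (hb : ∀ m : ℤ, m ≤ 0 → b ≠ (m : ℂ)) :
    HasSum (fun n : ℕ => hypTerm a b b z n) ((1 - z) ^ (-a)) := by
  have hpb : ∀ n : ℕ, (ascPochhammer ℂ n).eval b ≠ 0 := by
    intro n
    induction n with
    | zero => simp [ascPochhammer_zero]
    | succ n ih =>
      rw [ascPochhammer_succ_eval]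
      apply mul_ne_zero ih
      intro h
      have hb' : b = ((-(n : ℤ) : ℤ) : ℂ) := by
        push_cast
        exact eq_neg_of_add_eq_zero_left h
      exact hb (-(n : ℤ)) (by omega) hb'
  have heq : ∀ n : ℕ, hypTerm a b b z n
      = (ascPochhammer ℂ n).eval a / (n ! : ℂ) * z ^ n := by
    intro n
    unfold hypTerm
    rw [show (ascPochhammer ℂ n).eval a * (ascPochhammer ℂ n).eval b
      = (ascPochhammer ℂ n).eval b * (ascPochhammer ℂ n).eval a by ring,
      mul_div_mul_left _ _ (hpb n)]
  exact (binom_hasSum_aux a z hz).congr_fun fun n => heq n
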